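/- For every maximal forward solution of the shooting system with admissible initial data, and for all ρ ≥ 0 in its domain of existence, the following inequalities hold: κ(ρ) ≥ tanh(ρ) ≥ N(ρ), 0 ≤ ζ(ρ) ≤ √E₀ · sech(ρ), and κ(ρ) + N(ρ) ≤ 2 + √E₀ · sech(ρ). -/

import Mathlib

open Filter Topology Set Real

noncomputable section

/-- The initial energy `E₀ = 1 + 2U₀² − (1 − w₀²)²/r₀²`. -/
def initialEnergy (r₀ w₀ U₀ : ℝ) : ℝ := 1 + 2 * U₀ ^ 2 - (1 - w₀ ^ 2) ^ 2 / r₀ ^ 2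

/-- Admissible initial data `(r₀, w₀, U₀)`: `r₀ > 0`, `|w₀| ≤ 1`, `E₀ ≥ 0`. -/
def Admissible (r₀ w₀ U₀ : ℝ) : Prop :=
  0 < r₀ ∧ |w₀| ≤ 1 ∧ 0 ≤ initialEnergy r₀ w₀ U₀

/-- The forward domain `[0, ρmax) ⊆ ℝ`, for `ρmax ∈ (0, ∞]`. -/
def fwdDom (ρmax : EReal) : Set ℝ := {ρ : ℝ | 0 ≤ ρ ∧ (ρ : EReal) < ρmax}

/-- `(r, N, w, U, κ, ζ)` solves the shooting system on `[0, ρmax)` with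
initial data `(r₀, w₀, U₀)` (and `N(0) = κ(0) = 0`, `ζ(0) = √E₀`),
together with the constraint. -/
structure IsShootingSolOn (r₀ w₀ U₀ : ℝ) (ρmax : EReal)
    (r N w U κ ζ : ℝ → ℝ) : Prop where
  init_r : r 0 = r₀
  init_N : N 0 = 0
  init_w : w 0 = w₀
  init_U : U 0 = U₀
  init_κ : κ 0 = 0
  init_ζ : ζ 0 = Real.sqrt (initialEnergy r₀ w₀ U₀)
  r_pos : ∀ ρ ∈ fwdDom ρmax, 0 < r ρ
  ode_r : ∀ ρ ∈ fwdDom ρmax, HasDerivWithinAt r (r ρ * N ρ) (fwdDom ρmax) ρ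
  ode_N : ∀ ρ ∈ fwdDom ρmax,
      HasDerivWithinAt N (1 - (1 - w ρ ^ 2) ^ 2 / r ρ ^ 2 - κ ρ * N ρ) (fwdDom ρmax) ρ
  ode_w : ∀ ρ ∈ fwdDom ρmax, HasDerivWithinAt w (r ρ * U ρ) (fwdDom ρmax) ρ
  ode_U : ∀ ρ ∈ fwdDom ρmax,
      HasDerivWithinAt U (-(κ ρ - N ρ) * U ρ - w ρ * (1 - w ρ ^ 2) / r ρ) (fwdDom ρmax) ρ
  ode_κ : ∀ ρ ∈ fwdDom ρmax, HasDerivWithinAt κ (1 + 2 * U ρ ^ 2 - κ ρ ^ 2) (fwdDom ρmax) ρ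
  ode_ζ : ∀ ρ ∈ fwdDom ρmax, HasDerivWithinAt ζ (-(κ ρ) * ζ ρ) (fwdDom ρmax) ρ
  constraint : ∀ ρ ∈ fwdDom ρmax,
      ζ ρ ^ 2 = 1 + 2 * U ρ ^ 2 - (1 - w ρ ^ 2) ^ 2 / r ρ ^ 2 - 2 * κ ρ * N ρ + N ρ ^ 2

/-- A maximal forward solution: a solution on `[0, ρmax)` such that no solution with the
same initial data exists on a strictly larger forward interval. -/
def IsMaximalShootingSol (r₀ w₀ U₀ : ℝ) (ρmax : EReal)
    (r N w U κ ζ : ℝ → ℝ) : Prop :=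
  0 < ρmax ∧ IsShootingSolOn r₀ w₀ U₀ ρmax r N w U κ ζ ∧
    ∀ ρmax' : EReal, ρmax < ρmax' →
      ¬ ∃ r' N' w' U' κ' ζ' : ℝ → ℝ, IsShootingSolOn r₀ w₀ U₀ ρmax' r' N' w' U' κ' ζ'

/-- The set of zeros of `w` in `(0, ρmax)`. -/
def zerosOf (w : ℝ → ℝ) (ρmax : EReal) : Set ℝ :=
  {ρ : ℝ | 0 < ρ ∧ (ρ : EReal) < ρmax ∧ w ρ = 0}

/-- Singular orbit: the solution exists only up to a finite point `ρm`, at which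
`r → 0`, `N → −∞`, while `w, U, κ, ζ` remain bounded. -/
def SingularSol (ρmax : EReal) (r N w U κ ζ : ℝ → ℝ) : Prop :=
  ∃ ρm : ℝ, ρmax = (ρm : EReal) ∧ 0 < ρm ∧
    Tendsto r (𝓝[<] ρm) (𝓝 0) ∧ Tendsto N (𝓝[<] ρm) atBot ∧
    ∃ C : ℝ, ∀ ρ ∈ fwdDom ρmax, |w ρ| ≤ C ∧ |U ρ| ≤ C ∧ |κ ρ| ≤ C ∧ |ζ ρ| ≤ C

/-- Escaping singular orbit: singular, `w` leaves the strip `|w| ≤ 1`, and `w` has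
exactly `n` zeros for `ρ > 0`. -/
def EscapingSol (n : ℕ) (ρmax : EReal) (r N w U κ ζ : ℝ → ℝ) : Prop :=
  SingularSol ρmax r N w U κ ζ ∧ (∃ ρ ∈ fwdDom ρmax, 1 < |w ρ|) ∧
    (zerosOf w ρmax).Finite ∧ (zerosOf w ρmax).ncard = n

/-- Crashing singular orbit: singular with `|w| ≤ 1` on the whole domain. -/
def CrashingSol (ρmax : EReal) (r N w U κ ζ : ℝ → ℝ) : Prop :=
  SingularSol ρmax r N w U κ ζ ∧ ∀ ρ ∈ fwdDom ρmax, |w ρ| ≤ 1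

/-- Oscillatory orbit: global, with `(w, w') = (w, rU) → (0, 0)` as `ρ → ∞`. -/
def OscillatorySol (ρmax : EReal) (r N w U κ ζ : ℝ → ℝ) : Prop :=
  ρmax = ⊤ ∧ Tendsto w atTop (𝓝 0) ∧ Tendsto (fun ρ => r ρ * U ρ) atTop (𝓝 0)

/-- Regular orbit: global, with `(|w|, w') → (1, 0)` as `ρ → ∞`, and `w` has exactly
`n` zeros for `ρ > 0`. -/
def RegularSol (n : ℕ) (ρmax : EReal) (r N w U κ ζ : ℝ → ℝ) : Prop :=
  ρmax = ⊤ ∧ Tendsto (fun ρ => |w ρ|) atTop (𝓝 1) ∧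
    Tendsto (fun ρ => r ρ * U ρ) atTop (𝓝 0) ∧
    (zerosOf w ρmax).Finite ∧ (zerosOf w ρmax).ncard = n

/-- Initial data whose (unique) maximal orbit is escaping singular with `n` zeros of `w`. -/
def InE (n : ℕ) (r₀ w₀ U₀ : ℝ) : Prop :=
  Admissible r₀ w₀ U₀ ∧ ∃ (ρmax : EReal) (r N w U κ ζ : ℝ → ℝ),
    IsMaximalShootingSol r₀ w₀ U₀ ρmax r N w U κ ζ ∧ EscapingSol n ρmax r N w U κ ζ

/-- Initial data whose maximal orbit is crashing singular. -/
def InC (r₀ w₀ U₀ : ℝ) : Prop :=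
  Admissible r₀ w₀ U₀ ∧ ∃ (ρmax : EReal) (r N w U κ ζ : ℝ → ℝ),
    IsMaximalShootingSol r₀ w₀ U₀ ρmax r N w U κ ζ ∧ CrashingSol ρmax r N w U κ ζ

/-- Initial data whose maximal orbit is oscillatory. -/
def InO (r₀ w₀ U₀ : ℝ) : Prop :=
  Admissible r₀ w₀ U₀ ∧ ∃ (ρmax : EReal) (r N w U κ ζ : ℝ → ℝ),
    IsMaximalShootingSol r₀ w₀ U₀ ρmax r N w U κ ζ ∧ OscillatorySol ρmax r N w U κ ζ

/-- Initial data whose maximal orbit is regular with `n` zeros of `w`. -/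
def InR (n : ℕ) (r₀ w₀ U₀ : ℝ) : Prop :=
  Admissible r₀ w₀ U₀ ∧ ∃ (ρmax : EReal) (r N w U κ ζ : ℝ → ℝ),
    IsMaximalShootingSol r₀ w₀ U₀ ρmax r N w U κ ζ ∧ RegularSol n ρmax r N w U κ ζ


private lemma hasDerivAt_tanh' (x : ℝ) : HasDerivAt Real.tanh (1 - Real.tanh x ^ 2) x := by
  have h : Real.tanh = fun y => Real.sinh y / Real.cosh y :=
    funext fun y => Real.tanh_eq_sinh_div_cosh y
  have hd := (Real.hasDerivAt_sinh x).div (Real.hasDerivAt_cosh x) (Real.cosh_pos x).ne'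
  rw [show (Real.sinh / Real.cosh : ℝ → ℝ) = Real.tanh from
    funext fun y => (Real.tanh_eq_sinh_div_cosh y).symm] at hd
  refine hd.congr_deriv ?_
  have h0 : Real.cosh x ≠ 0 := (Real.cosh_pos x).ne'
  rw [Real.tanh_eq_sinh_div_cosh]
  field_simp

private lemma continuous_tanh' : Continuous Real.tanh :=
  continuous_iff_continuousAt.mpr fun x => (hasDerivAt_tanh' x).continuousAt

private lemma Icc_subset_fwdDom {ρmax : EReal} {b : ℝ} (hb : b ∈ fwdDom ρmax) :
    Icc 0 b ⊆ fwdDom ρmax := fun x hx =>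
  ⟨hx.1, lt_of_le_of_lt (EReal.coe_le_coe_iff.mpr hx.2) hb.2⟩

set_option maxHeartbeats 1000000 in
/-- Core Gronwall-type nonnegativity lemma. -/
private lemma nonneg_of_ode {ρmax : EReal} (f d G : ℝ → ℝ)
    (hder : ∀ ρ ∈ fwdDom ρmax, HasDerivWithinAt f (d ρ) (fwdDom ρmax) ρ)
    (hG : ContinuousOn G (fwdDom ρmax))
    (h0 : 0 ≤ f 0)
    (hd : ∀ ρ ∈ fwdDom ρmax, f ρ ≤ 0 → G ρ * f ρ ≤ d ρ) :
    ∀ ρ ∈ fwdDom ρmax, 0 ≤ f ρ := by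
  intro b hb
  by_contra hneg
  rw [not_le] at hneg
  have hsub : Icc 0 b ⊆ fwdDom ρmax := Icc_subset_fwdDom hb
  have hb0 : 0 ≤ b := hb.1
  have hbpos : 0 < b := by
    rcases hb0.lt_or_eq with h | h
    · exact h
    · exfalso; rw [← h] at hneg; linarith
  have hcf : ContinuousOn f (Icc 0 b) := fun x hx =>
    ((hder x (hsub hx)).continuousWithinAt).mono hsub
  have hScl : IsClosed (Icc 0 b ∩ f ⁻¹' (Ici 0)) :=
    hcf.preimage_isClosed_of_isClosed isClosed_Icc isClosed_Ici
  have hScomp : IsCompact (Icc 0 b ∩ f ⁻¹' (Ici 0)) :=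
    (isCompact_Icc).of_isClosed_subset hScl inter_subset_left
  have hSne : (Icc 0 b ∩ f ⁻¹' (Ici 0)).Nonempty :=
    ⟨0, ⟨le_refl 0, hb0⟩, h0⟩
  obtain ⟨τ, hτS, hτub⟩ := hScomp.exists_isGreatest hSne
  have hτIcc : τ ∈ Icc 0 b := hτS.1
  have hfτ0 : 0 ≤ f τ := hτS.2
  have hτb : τ < b := by
    rcases hτIcc.2.lt_or_eq with h | h
    · exact h
    · exfalso; rw [h] at hfτ0; linarith
  have hfx : ∀ x ∈ Ioc τ b, f x < 0 := by
    intro x hx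
    by_contra hge
    rw [not_lt] at hge
    exact absurd (hτub ⟨⟨le_trans hτIcc.1 hx.1.le, hx.2⟩, hge⟩) (not_le.mpr hx.1)
  have hIocsub : Ioc τ b ⊆ Icc 0 b := fun x hx =>
    ⟨le_trans hτIcc.1 hx.1.le, hx.2⟩
  have hfτle : f τ ≤ 0 := by
    have hne : (𝓝[Ioc τ b] τ).NeBot := by
      rw [← mem_closure_iff_nhdsWithin_neBot, closure_Ioc hτb.ne]
      exact left_mem_Icc.mpr hτb.le
    have htend : Tendsto f (𝓝[Ioc τ b] τ) (𝓝 (f τ)) :=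
      ((hcf τ hτIcc).mono hIocsub).tendsto
    exact le_of_tendsto htend
      (eventually_nhdsWithin_of_forall fun x hx => (hfx x hx).le)
  have hfτ : f τ = 0 := le_antisymm hfτle hfτ0
  obtain ⟨M, hM⟩ :=
    (isCompact_Icc (a := (0:ℝ)) (b := b)).exists_bound_of_continuousOn (hG.mono hsub)
  set g : ℝ → ℝ := fun x => f x * Real.exp (-(M * x)) with hg
  have hτbsub : Icc τ b ⊆ Icc 0 b := fun x hx => ⟨le_trans hτIcc.1 hx.1, hx.2⟩
  have hfle : ∀ x ∈ Icc τ b, f x ≤ 0 := by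
    intro x hx
    rcases hx.1.lt_or_eq with h | h
    · exact (hfx x ⟨h, hx.2⟩).le
    · rw [← h, hfτ]
  have hkey : ∀ x ∈ Ioo τ b,
      HasDerivAt g (d x * Real.exp (-(M * x)) + f x * (Real.exp (-(M * x)) * -(M * 1))) x := by
    intro x hx
    have hxpos : 0 < x := lt_of_le_of_lt hτIcc.1 hx.1
    have hnb : fwdDom ρmax ∈ 𝓝 x := by
      have hsub2 : Ioo 0 b ⊆ fwdDom ρmax := fun y hy =>
        ⟨hy.1.le, lt_trans (EReal.coe_lt_coe_iff.mpr hy.2) hb.2⟩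
      exact mem_of_superset (Ioo_mem_nhds hxpos hx.2) hsub2
    have hfd : HasDerivAt f (d x) x :=
      (hder x (mem_of_mem_nhds hnb)).hasDerivAt hnb
    have hexp : HasDerivAt (fun y : ℝ => Real.exp (-(M * y)))
        (Real.exp (-(M * x)) * -(M * 1)) x :=
      (((hasDerivAt_id x).const_mul M).neg).exp
    exact hfd.mul hexp
  have hmono : MonotoneOn g (Icc τ b) := by
    apply monotoneOn_of_deriv_nonneg (convex_Icc τ b)
    · exact ((hcf.mono hτbsub).mul
        ((Real.continuous_exp.comp (continuous_const.mul continuous_id).neg).continuousOn))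
    · intro x hx
      rw [interior_Icc] at hx
      exact (hkey x hx).differentiableAt.differentiableWithinAt
    · intro x hx
      rw [interior_Icc] at hx
      rw [(hkey x hx).deriv]
      have hxIcc : x ∈ Icc τ b := ⟨hx.1.le, hx.2.le⟩
      have hfneg : f x ≤ 0 := hfle x hxIcc
      have hxD : x ∈ fwdDom ρmax := hsub (hτbsub hxIcc)
      have hGle : G x ≤ M := le_trans (le_abs_self _) (hM x (hτbsub hxIcc))
      have h1 : M * f x ≤ G x * f x := by nlinarith
      have h2 : M * f x ≤ d x := le_trans h1 (hd x hxD hfneg)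
      have hep : 0 < Real.exp (-(M * x)) := Real.exp_pos _
      nlinarith [mul_nonneg (sub_nonneg.mpr h2) hep.le]
  have hgτ : g τ = 0 := by simp [hg, hfτ]
  have hgle : g τ ≤ g b := hmono ⟨le_refl τ, hτb.le⟩ ⟨hτb.le, le_refl b⟩ hτb.le
  rw [hgτ] at hgle
  have hgb : g b = f b * Real.exp (-(M * b)) := rfl
  rw [hgb] at hgle
  have hep : 0 < Real.exp (-(M * b)) := Real.exp_pos _
  nlinarith [mul_neg_of_neg_of_pos hneg hep]

set_option maxHeartbeats 2000000 in
/-- Basic inequalities: `κ ≥ tanh ρ ≥ N`, `0 ≤ ζ ≤ √E₀ sech ρ`,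
and `κ + N ≤ 2 + √E₀ sech ρ` on the domain of existence. -/

theorem basic_inequalities (r₀ w₀ U₀ : ℝ) (hadm : Admissible r₀ w₀ U₀)
    (ρmax : EReal) (r N w U κ ζ : ℝ → ℝ)
    (hsol : IsMaximalShootingSol r₀ w₀ U₀ ρmax r N w U κ ζ) :
    ∀ ρ ∈ fwdDom ρmax,
      Real.tanh ρ ≤ κ ρ ∧ N ρ ≤ Real.tanh ρ ∧
      0 ≤ ζ ρ ∧ ζ ρ ≤ Real.sqrt (initialEnergy r₀ w₀ U₀) * (Real.cosh ρ)⁻¹ ∧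
      κ ρ + N ρ ≤ 2 + Real.sqrt (initialEnergy r₀ w₀ U₀) * (Real.cosh ρ)⁻¹  := by
  obtain ⟨hρpos, hs, -⟩ := hsol
  set c := Real.sqrt (initialEnergy r₀ w₀ U₀) with hcdef
  have hc0 : 0 ≤ c := Real.sqrt_nonneg _
  have hκc : ContinuousOn κ (fwdDom ρmax) := fun x hx => (hs.ode_κ x hx).continuousWithinAt
  -- Step 1 : tanh ≤ κ
  have h1 : ∀ ρ ∈ fwdDom ρmax, 0 ≤ κ ρ - Real.tanh ρ := by
    apply nonneg_of_ode (fun ρ => κ ρ - Real.tanh ρ)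
      (fun ρ => (1 + 2 * U ρ ^ 2 - κ ρ ^ 2) - (1 - Real.tanh ρ ^ 2))
      (fun ρ => -(κ ρ + Real.tanh ρ))
    · intro ρ hρ
      exact (hs.ode_κ ρ hρ).sub (hasDerivAt_tanh' ρ).hasDerivWithinAt
    · exact (hκc.add continuous_tanh'.continuousOn).neg
    · rw [hs.init_κ, Real.tanh_zero]; norm_num
    · intro ρ hρ _
      nlinarith [sq_nonneg (U ρ)]
  -- Step 2 : N ≤ tanh
  have h2 : ∀ ρ ∈ fwdDom ρmax, 0 ≤ Real.tanh ρ - N ρ := by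
    apply nonneg_of_ode (fun ρ => Real.tanh ρ - N ρ)
      (fun ρ => (1 - Real.tanh ρ ^ 2) - (1 - (1 - w ρ ^ 2) ^ 2 / r ρ ^ 2 - κ ρ * N ρ))
      (fun ρ => -(κ ρ))
    · intro ρ hρ
      exact (hasDerivAt_tanh' ρ).hasDerivWithinAt.sub (hs.ode_N ρ hρ)
    · exact hκc.neg
    · rw [hs.init_N, Real.tanh_zero]; norm_num
    · intro ρ hρ _
      have ht : 0 ≤ Real.tanh ρ := by
        rw [Real.tanh_eq_sinh_div_cosh]
        exact div_nonneg (Real.sinh_nonneg_iff.mpr hρ.1) (Real.cosh_pos ρ).le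
      have hx : 0 ≤ (1 - w ρ ^ 2) ^ 2 / r ρ ^ 2 := div_nonneg (sq_nonneg _) (sq_nonneg _)
      nlinarith [mul_nonneg ht (h1 ρ hρ)]
  -- Step 3 : 0 ≤ ζ
  have h3 : ∀ ρ ∈ fwdDom ρmax, 0 ≤ ζ ρ := by
    apply nonneg_of_ode ζ (fun ρ => -(κ ρ) * ζ ρ) (fun ρ => -(κ ρ))
      hs.ode_ζ hκc.neg
    · rw [hs.init_ζ]; exact Real.sqrt_nonneg _
    · intro ρ hρ _; exact le_refl _
  -- Step 4 : ζ cosh ≤ c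
  have h4 : ∀ ρ ∈ fwdDom ρmax, 0 ≤ c - ζ ρ * Real.cosh ρ := by
    apply nonneg_of_ode (fun ρ => c - ζ ρ * Real.cosh ρ)
      (fun ρ => 0 - ((-(κ ρ) * ζ ρ) * Real.cosh ρ + ζ ρ * Real.sinh ρ))
      (fun _ => 0)
    · intro ρ hρ
      exact (hasDerivWithinAt_const ρ _ c).sub
        ((hs.ode_ζ ρ hρ).mul (Real.hasDerivAt_cosh ρ).hasDerivWithinAt)
    · exact continuousOn_const
    · rw [hs.init_ζ, Real.cosh_zero, ← hcdef]; norm_num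
    · intro ρ hρ _
      have hchp : (0:ℝ) < Real.cosh ρ := Real.cosh_pos ρ
      have ht : Real.sinh ρ / Real.cosh ρ ≤ κ ρ := by
        rw [← Real.tanh_eq_sinh_div_cosh]; linarith [h1 ρ hρ]
      have ht' : Real.sinh ρ ≤ κ ρ * Real.cosh ρ := (div_le_iff₀ hchp).mp ht
      nlinarith [mul_nonneg (h3 ρ hρ) (sub_nonneg.mpr ht')]
  -- Step 5 : the barrier for κ + N
  have h5 : ∀ ρ ∈ fwdDom ρmax,
      0 ≤ 2 * Real.sinh ρ * Real.cosh ρ -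
        (κ ρ + N ρ) * (Real.cosh ρ * Real.cosh ρ) + c * Real.cosh ρ := by
    apply nonneg_of_ode
      (fun ρ => 2 * Real.sinh ρ * Real.cosh ρ -
        (κ ρ + N ρ) * (Real.cosh ρ * Real.cosh ρ) + c * Real.cosh ρ)
      (fun ρ => 2 * (Real.cosh ρ * Real.cosh ρ + Real.sinh ρ * Real.sinh ρ) -
        (((1 + 2 * U ρ ^ 2 - κ ρ ^ 2) + (1 - (1 - w ρ ^ 2) ^ 2 / r ρ ^ 2 - κ ρ * N ρ)) *
            (Real.cosh ρ * Real.cosh ρ) +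
          (κ ρ + N ρ) * (2 * Real.cosh ρ * Real.sinh ρ)) + c * Real.sinh ρ)
      Real.tanh
    · intro ρ hρ
      have hsinh := (Real.hasDerivAt_sinh ρ).hasDerivWithinAt (s := fwdDom ρmax)
      have hcosh := (Real.hasDerivAt_cosh ρ).hasDerivWithinAt (s := fwdDom ρmax)
      have hbig := (((hsinh.const_mul 2).mul hcosh).sub
        (((hs.ode_κ ρ hρ).add (hs.ode_N ρ hρ)).mul (hcosh.mul hcosh))).add (hcosh.const_mul c)
      refine hbig.congr_deriv ?_
      simp only [Pi.mul_apply, Pi.add_apply]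
      ring
    · exact continuous_tanh'.continuousOn
    · rw [hs.init_κ, hs.init_N, Real.sinh_zero, Real.cosh_zero]; norm_num [hc0]
    · intro ρ hρ hle
      have hcon := hs.constraint ρ hρ
      have hchp : (0:ℝ) < Real.cosh ρ := Real.cosh_pos ρ
      have hNb : N ρ * Real.cosh ρ ≤ Real.sinh ρ := by
        have hN : N ρ ≤ Real.sinh ρ / Real.cosh ρ := by
          rw [← Real.tanh_eq_sinh_div_cosh]; linarith [h2 ρ hρ]
        exact (le_div_iff₀ hchp).mp hN
      have hZc : ζ ρ * Real.cosh ρ ≤ c := by linarith [h4 ρ hρ]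
      have hZ0 : 0 ≤ ζ ρ := h3 ρ hρ
      have hSh : 0 ≤ Real.sinh ρ := Real.sinh_nonneg_iff.mpr hρ.1
      have hpyth : Real.cosh ρ ^ 2 = Real.sinh ρ ^ 2 + 1 := Real.cosh_sq ρ
      rw [Real.tanh_eq_sinh_div_cosh, div_mul_eq_mul_div, div_le_iff₀ hchp]
      have hX : (1 - w ρ ^ 2) ^ 2 / r ρ ^ 2 =
          1 + 2 * U ρ ^ 2 - ζ ρ ^ 2 - 2 * κ ρ * N ρ + N ρ ^ 2 := by linarith [hcon]
      rw [hX]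
      set K := κ ρ
      set Nv := N ρ
      set Z := ζ ρ
      set Ch := Real.cosh ρ
      set Sh := Real.sinh ρ
      have hA : 0 ≤ (K + Nv) * Ch - 2 * Sh - c := by
        by_contra h'
        rw [not_le] at h'
        nlinarith [hle]
      have hAc : 0 ≤ (K + Nv) * Ch - 2 * Sh := by linarith
      have hv : (K + Nv) * Ch - 2 * Sh ≤ (K - Nv) * Ch := by nlinarith [hNb]
      have hv2 : ((K + Nv) * Ch - 2 * Sh) ^ 2 ≤ ((K - Nv) * Ch) ^ 2 :=
        pow_le_pow_left₀ hAc hv 2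
      have hZc2 : (Z * Ch) ^ 2 ≤ c ^ 2 :=
        pow_le_pow_left₀ (mul_nonneg hZ0 hchp.le) hZc 2
      have hbr : 0 ≤ Ch ^ 2 - Sh ^ 2 - (Z * Ch) ^ 2 +
          ((K + Nv) * Ch - 2 * Sh) ^ 2 / 4 + 3 / 4 * ((K - Nv) * Ch) ^ 2 := by
        nlinarith [hpyth, hZc2, hv2, sq_nonneg ((K + Nv) * Ch - 2 * Sh - c),
          mul_nonneg hA hc0]
      nlinarith [mul_nonneg hchp.le hbr]
  -- Assemble
  intro ρ hρ
  have hchp : (0:ℝ) < Real.cosh ρ := Real.cosh_pos ρ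
  have hch2 : (0:ℝ) < Real.cosh ρ ^ 2 := by positivity
  have hSC : Real.sinh ρ < Real.cosh ρ := Real.sinh_lt_cosh ρ
  refine ⟨by linarith [h1 ρ hρ], by linarith [h2 ρ hρ], h3 ρ hρ, ?_, ?_⟩
  · have h4' := h4 ρ hρ
    rw [show c * (Real.cosh ρ)⁻¹ = c / Real.cosh ρ from (div_eq_mul_inv c _).symm,
      le_div_iff₀ hchp]
    linarith
  · have h5' := h5 ρ hρ
    rw [show (2:ℝ) + c * (Real.cosh ρ)⁻¹ =
        (2 * Real.cosh ρ ^ 2 + c * Real.cosh ρ) / Real.cosh ρ ^ 2 by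
          field_simp,
      le_div_iff₀ hch2]
    nlinarith [mul_pos hchp hchp]
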